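/- Let U be the cyclic 5-shift on ℂ⁵, i.e. the unitary matrix defined on the standard orthonormal basis e₀, …, e₄ by U e_j = e_{j+1 (mod 5)}. Then 0 belongs to the rank-2 numerical range Λ₂(U); that is, there exists an orthogonal projection P of rank 2 on ℂ⁵ with PUP = 0. -/

import Mathlib

open Matrix Complex

/-- The rank-k numerical range of a square complex matrix `T`:
all `λ ∈ ℂ` such that `P T P = λ P` for some orthogonal projection `P` of rank `k`. -/
def rankKRange {n : Type*} [Fintype n] [DecidableEq n]
    (k : ℕ) (T : Matrix n n ℂ) : Set ℂ :=
  {lam : ℂ | ∃ P : Matrix n n ℂ,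
    P.IsHermitian ∧ P * P = P ∧ P.rank = k ∧ P * T * P = lam • P}

/-- 0 belongs to the rank-2 numerical range of the cyclic 5-shift. -/
theorem zero_mem_rankKRange_two_cyclicShift (U : Matrix (Fin 5) (Fin 5) ℂ)
    (hU : ∀ j : Fin 5, U *ᵥ (Pi.single j 1) = Pi.single (j + 1) 1) :
    (0 : ℂ) ∈ rankKRange 2 U := by
  have hU' : ∀ i j : Fin 5, U i j = if i = j + 1 then 1 else 0 := by
    intro i j
    have := congrFun (hU j) i
    simpa [mulVec_single, Pi.single_apply] using this
  set w : Fin 5 → ℂ := fun i => if i = 0 ∨ i = 2 then 1 else 0 with hw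
  refine ⟨diagonal w, ?_, ?_, ?_, ?_⟩
  · apply isHermitian_diagonal_of_self_adjoint
    funext i
    by_cases h : i = 0 ∨ i = 2 <;> simp [hw, h, _root_.IsSelfAdjoint]
  · rw [diagonal_mul_diagonal]
    refine congrArg diagonal (funext fun i => ?_)
    by_cases h : i = 0 ∨ i = 2 <;> simp [hw, h]
  · rw [rank_diagonal]
    have hiff : ∀ i : Fin 5, w i ≠ 0 ↔ (i = 0 ∨ i = 2) := by
      intro i
      by_cases h : i = 0 ∨ i = 2 <;> simp [hw, h]
    rw [Fintype.card_congr (Equiv.subtypeEquivRight hiff)]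
    decide
  · ext i j
    simp only [mul_apply, diagonal_apply, hU', zero_smul, Matrix.zero_apply]
    fin_cases i <;> fin_cases j <;> simp [hw]
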